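/- Let (X,d) be a metric space, I ⊂ ℝ a closed interval, and equip I × X with the product distance d_c((t,x),(s,y)) = sqrt(|t−s|² + d(x,y)²). Let f : I × X → ℝ be of the form f(t,x) = g₁(x) + h(t)g₂(x), where g₁, g₂ : X → ℝ and h : I → ℝ are Lipschitz. Then for every (t,x) ∈ I × X one has lip f(t,x)² ≤ lip f^{(t)}(x)² + lip f^{(x)}(t)², where f^{(t)} : X → ℝ is f(t,·) and f^{(x)} : I → ℝ is f(·,x). -/

import Mathlib

open Filter Set Metric Topology

noncomputable section

namespace MMS

/-- The local Lipschitz constant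
`lip u (z) := limsup_{w → z} |u(w) - u(z)| / d(w,z)` (equal to `0` at isolated points). -/
def liploc {Z : Type*} [MetricSpace Z] (u : Z → ℝ) (z : Z) : ℝ :=
  limsup (fun w => |u w - u z| / dist w z) (𝓝[≠] z)

/-- The cartesian product `I × X` endowed with the distance
`d_c((t,x),(s,y)) = sqrt (|t-s|² + d(x,y)²)`. -/
abbrev Xc (I : Set ℝ) (X : Type*) [MetricSpace X] : Type _ := WithLp 2 (↥I × X)

/-- The identification of `I × X` with the metric space `X_c`. -/
def toC {I : Set ℝ} {X : Type*} [MetricSpace X] (p : ↥I × X) : Xc I X :=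
  (WithLp.equiv 2 (↥I × X)).symm p

lemma aux_cs (a b u v : ℝ) : a*u + b*v ≤ Real.sqrt (a^2+b^2) * Real.sqrt (u^2+v^2) := by
  have h1 : (0:ℝ) ≤ a^2+b^2 := by positivity
  have h2 : (0:ℝ) ≤ u^2+v^2 := by positivity
  have s1 := Real.sq_sqrt h1
  have s2 := Real.sq_sqrt h2
  have n1 := Real.sqrt_nonneg (a^2+b^2)
  have n2 := Real.sqrt_nonneg (u^2+v^2)
  nlinarith [sq_nonneg (a*v - b*u), sq_nonneg (a*u + b*v - Real.sqrt (a^2+b^2) * Real.sqrt (u^2+v^2)), mul_nonneg n1 n2]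

lemma aux_quot_le {Z : Type*} [MetricSpace Z] {u : Z → ℝ} {z : Z} {M : ℝ} (hM : 0 ≤ M)
    (hb : ∀ w, |u w - u z| ≤ M * dist w z) (w : Z) : |u w - u z| / dist w z ≤ M := by
  rcases eq_or_ne w z with rfl | hne
  · simpa using hM
  · rw [div_le_iff₀ (dist_pos.mpr hne)]
    exact hb w

lemma aux_ev {Z : Type*} [MetricSpace Z] {u : Z → ℝ} {z : Z} {M c : ℝ} (hM : 0 ≤ M)
    (hb : ∀ w, |u w - u z| ≤ M * dist w z) (hc : liploc u z < c) :
    ∀ᶠ w in 𝓝 z, |u w - u z| ≤ c * dist w z := by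
  have hbd : IsBoundedUnder (· ≤ ·) (𝓝[≠] z) (fun w => |u w - u z| / dist w z) :=
    ⟨M, eventually_map.2 (Eventually.of_forall (aux_quot_le hM hb))⟩
  have h2 := eventually_lt_of_limsup_lt hc hbd
  rw [eventually_nhdsWithin_iff] at h2
  filter_upwards [h2] with w hw
  rcases eq_or_ne w z with rfl | hne
  · simp
  · have h3 := le_of_lt (hw (Set.mem_compl_singleton_iff.mpr hne))
    rwa [div_le_iff₀ (dist_pos.mpr hne)] at h3

/-- **Lemma.** For `f(t,x) = g₁(x) + h(t)·g₂(x)` with `g₁`, `g₂`, `h` Lipschitz, at every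
point `(t,x)` of `I × X` one has `lip f (t,x)² ≤ lip f^{(t)} (x)² + lip f^{(x)} (t)²`. -/
theorem liploc_sq_le_of_product_form
    {X : Type*} [MetricSpace X]
    (I : Set ℝ) (hIne : I.Nonempty) (hIcl : IsClosed I) (hIconn : I.OrdConnected)
    (g₁ g₂ : X → ℝ) (h : ↥I → ℝ) (K₁ K₂ K₃ : NNReal)
    (hg₁ : LipschitzWith K₁ g₁) (hg₂ : LipschitzWith K₂ g₂) (hh : LipschitzWith K₃ h)
    (f : Xc I X → ℝ)
    (hf : ∀ (t : ↥I) (x : X), f (toC (t, x)) = g₁ x + h t * g₂ x) :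
    ∀ (t : ↥I) (x : X),
      (liploc f (toC (t, x))) ^ 2
        ≤ (liploc (fun y => f (toC (t, y))) x) ^ 2
          + (liploc (fun s => f (toC (s, x))) t) ^ 2 := by
  intro t x
  set z : Xc I X := toC (t, x) with hz
  set F : X → ℝ := fun y => f (toC (t, y)) with hFdef
  set G : ↥I → ℝ := fun s => f (toC (s, x)) with hGdef
  set A : ℝ := liploc F x with hA
  set B : ℝ := liploc G t with hB
  -- trivial case: isolated point
  by_cases hbot : 𝓝[≠] z = ⊥
  · have hC0 : liploc f z = 0 := by
      rw [liploc, hbot, Filter.limsup_eq]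
      simp only [eventually_bot, Set.setOf_true]
      exact Real.sInf_of_not_bddBelow not_bddBelow_univ
    rw [hC0]
    nlinarith [sq_nonneg A, sq_nonneg B]
  haveI hne : (𝓝[≠] z).NeBot := ⟨hbot⟩
  -- basic facts
  have hz1 : z.fst = t := rfl
  have hz2 : z.snd = x := rfl
  have hfw : ∀ w : Xc I X, f w = g₁ w.snd + h w.fst * g₂ w.snd := fun w => hf w.fst w.snd
  have hFx : ∀ y, F y = g₁ y + h t * g₂ y := fun y => hf t y
  have hGs : ∀ s, G s = g₁ x + h s * g₂ x := fun s => hf s x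
  have hdecomp : ∀ w : Xc I X,
      f w - f z = (F w.snd - F x) + (G w.fst - G t) + (h w.fst - h t) * (g₂ w.snd - g₂ x) := by
    intro w
    rw [hfw w, hfw z, hFx, hFx, hGs, hGs, hz1, hz2]
    ring
  -- Lipschitz bounds for the slice functions
  have hM₁ : (0:ℝ) ≤ (K₁:ℝ) + |h t| * (K₂:ℝ) := by positivity
  have hFb : ∀ y, |F y - F x| ≤ ((K₁:ℝ) + |h t| * (K₂:ℝ)) * dist y x := by
    intro y
    have e1 : F y - F x = (g₁ y - g₁ x) + h t * (g₂ y - g₂ x) := by rw [hFx, hFx]; ring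
    have b1 : |g₁ y - g₁ x| ≤ (K₁:ℝ) * dist y x := by
      simpa [Real.dist_eq] using hg₁.dist_le_mul y x
    have b2 : |g₂ y - g₂ x| ≤ (K₂:ℝ) * dist y x := by
      simpa [Real.dist_eq] using hg₂.dist_le_mul y x
    calc |F y - F x| ≤ |g₁ y - g₁ x| + |h t| * |g₂ y - g₂ x| := by
          rw [e1]; exact (abs_add_le _ _).trans (by rw [abs_mul])
      _ ≤ (K₁:ℝ) * dist y x + |h t| * ((K₂:ℝ) * dist y x) := by
          gcongr
      _ = ((K₁:ℝ) + |h t| * (K₂:ℝ)) * dist y x := by ring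
  have hM₂ : (0:ℝ) ≤ |g₂ x| * (K₃:ℝ) := by positivity
  have hGb : ∀ s, |G s - G t| ≤ (|g₂ x| * (K₃:ℝ)) * dist s t := by
    intro s
    have e1 : G s - G t = (h s - h t) * g₂ x := by rw [hGs, hGs]; ring
    have b1 : |h s - h t| ≤ (K₃:ℝ) * dist s t := by
      simpa [Real.dist_eq] using hh.dist_le_mul s t
    calc |G s - G t| = |h s - h t| * |g₂ x| := by rw [e1, abs_mul]
      _ ≤ ((K₃:ℝ) * dist s t) * |g₂ x| := by gcongr
      _ = (|g₂ x| * (K₃:ℝ)) * dist s t := by ring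
  -- component distances
  have hcomp : ∀ w : Xc I X, dist w.fst t ≤ dist w z ∧ dist w.snd x ≤ dist w z ∧
      dist w z = Real.sqrt (dist w.fst t ^ 2 + dist w.snd x ^ 2) := by
    intro w
    have hD : dist w z = Real.sqrt (dist w.fst t ^ 2 + dist w.snd x ^ 2) := by
      have h2 : (0:ℝ) < (2:ENNReal).toReal := by norm_num
      rw [show dist w.fst t = dist w.fst z.fst from rfl, show dist w.snd x = dist w.snd z.snd from rfl,
        WithLp.prod_dist_eq_add h2, Real.sqrt_eq_rpow]
      norm_num
    refine ⟨?_, ?_, hD⟩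
    · rw [hD]
      calc dist w.fst t = Real.sqrt (dist w.fst t ^ 2) := (Real.sqrt_sq dist_nonneg).symm
        _ ≤ _ := Real.sqrt_le_sqrt (by nlinarith [sq_nonneg (dist w.snd x)])
    · rw [hD]
      calc dist w.snd x = Real.sqrt (dist w.snd x ^ 2) := (Real.sqrt_sq dist_nonneg).symm
        _ ≤ _ := Real.sqrt_le_sqrt (by nlinarith [sq_nonneg (dist w.fst t)])
  -- the main eventual bound
  have hev : ∀ ε : ℝ, 0 < ε → ∀ᶠ w in 𝓝[≠] z,
      |f w - f z| / dist w z ≤ Real.sqrt ((A+ε)^2 + (B+ε)^2) + (K₂:ℝ)*(K₃:ℝ)*ε := by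
    intro ε hε
    obtain ⟨r₁, hr₁, hball₁⟩ := Metric.eventually_nhds_iff.mp
      (aux_ev hM₁ hFb (show liploc F x < A + ε from lt_add_of_pos_right _ hε))
    obtain ⟨r₂, hr₂, hball₂⟩ := Metric.eventually_nhds_iff.mp
      (aux_ev hM₂ hGb (show liploc G t < B + ε from lt_add_of_pos_right _ hε))
    have hrpos : 0 < min r₁ (min r₂ ε) := lt_min hr₁ (lt_min hr₂ hε)
    have hball : ∀ᶠ w in 𝓝[≠] z, dist w z < min r₁ (min r₂ ε) := by
      apply Eventually.filter_mono nhdsWithin_le_nhds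
      filter_upwards [Metric.ball_mem_nhds z hrpos] with w hw using mem_ball.mp hw
    filter_upwards [hball, self_mem_nhdsWithin] with w hwd hwz
    have hwne : w ≠ z := hwz
    have hDpos : 0 < dist w z := dist_pos.mpr hwne
    obtain ⟨hd₁, hd₂, hD⟩ := hcomp w
    set d₁ := dist w.fst t
    set d₂ := dist w.snd x
    set D := dist w z
    have h₁ : |F w.snd - F x| ≤ (A+ε) * d₂ :=
      hball₁ (lt_of_le_of_lt hd₂ (lt_of_lt_of_le hwd (min_le_left _ _)))
    have h₂ : |G w.fst - G t| ≤ (B+ε) * d₁ :=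
      hball₂ (lt_of_le_of_lt hd₁ (lt_of_lt_of_le hwd ((min_le_right _ _).trans (min_le_left _ _))))
    have hDε : D < ε := lt_of_lt_of_le hwd ((min_le_right _ _).trans (min_le_right _ _))
    have h₃ : |(h w.fst - h t) * (g₂ w.snd - g₂ x)| ≤ (K₂:ℝ)*(K₃:ℝ)*(ε*D) := by
      have b1 : |h w.fst - h t| ≤ (K₃:ℝ) * d₁ := by
        simpa [Real.dist_eq] using hh.dist_le_mul w.fst t
      have b2 : |g₂ w.snd - g₂ x| ≤ (K₂:ℝ) * d₂ := by
        simpa [Real.dist_eq] using hg₂.dist_le_mul w.snd x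
      have p0 : |(h w.fst - h t) * (g₂ w.snd - g₂ x)| ≤ ((K₃:ℝ) * d₁) * ((K₂:ℝ) * d₂) := by
        rw [abs_mul]
        exact mul_le_mul b1 b2 (abs_nonneg _) (by positivity)
      have p1 : d₁ * d₂ ≤ D * D := mul_le_mul hd₁ hd₂ dist_nonneg (le_trans dist_nonneg hd₁)
      have p2 : D * D ≤ ε * D := mul_le_mul_of_nonneg_right hDε.le dist_nonneg
      nlinarith [mul_le_mul_of_nonneg_left p1 (by positivity : (0:ℝ) ≤ (K₂:ℝ)*(K₃:ℝ)),
        mul_le_mul_of_nonneg_left p2 (by positivity : (0:ℝ) ≤ (K₂:ℝ)*(K₃:ℝ))]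
    have hcs : (A+ε) * d₂ + (B+ε) * d₁ ≤ Real.sqrt ((A+ε)^2 + (B+ε)^2) * D := by
      have := aux_cs (A+ε) (B+ε) d₂ d₁
      have hDrw : Real.sqrt (d₂^2 + d₁^2) = D := by rw [add_comm]; exact hD.symm
      rwa [hDrw] at this
    have htot : |f w - f z| ≤ (Real.sqrt ((A+ε)^2 + (B+ε)^2) + (K₂:ℝ)*(K₃:ℝ)*ε) * D := by
      calc |f w - f z|
          = |(F w.snd - F x) + (G w.fst - G t) + (h w.fst - h t) * (g₂ w.snd - g₂ x)| := by
            rw [hdecomp w]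
        _ ≤ |F w.snd - F x| + |G w.fst - G t| + |(h w.fst - h t) * (g₂ w.snd - g₂ x)| :=
            (abs_add_le _ _).trans (by gcongr; exact abs_add_le _ _)
        _ ≤ (A+ε) * d₂ + (B+ε) * d₁ + (K₂:ℝ)*(K₃:ℝ)*(ε*D) := by gcongr
        _ ≤ Real.sqrt ((A+ε)^2 + (B+ε)^2) * D + (K₂:ℝ)*(K₃:ℝ)*(ε*D) := by linarith
        _ = (Real.sqrt ((A+ε)^2 + (B+ε)^2) + (K₂:ℝ)*(K₃:ℝ)*ε) * D := by ring
    rw [div_le_iff₀ hDpos]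
    exact htot
  -- limsup bound
  have hkey : ∀ ε : ℝ, 0 < ε →
      liploc f z ≤ Real.sqrt ((A+ε)^2 + (B+ε)^2) + (K₂:ℝ)*(K₃:ℝ)*ε := by
    intro ε hε
    exact limsup_le_of_le
      (isCoboundedUnder_le_of_le _ (fun w => div_nonneg (abs_nonneg _) dist_nonneg))
      (hev ε hε)
  have hCle : liploc f z ≤ Real.sqrt (A^2 + B^2) := by
    have hcont : Tendsto (fun ε : ℝ => Real.sqrt ((A+ε)^2 + (B+ε)^2) + (K₂:ℝ)*(K₃:ℝ)*ε)
        (𝓝[>] (0:ℝ)) (𝓝 (Real.sqrt (A^2 + B^2))) := by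
      have hc : Continuous (fun ε : ℝ => Real.sqrt ((A+ε)^2 + (B+ε)^2) + (K₂:ℝ)*(K₃:ℝ)*ε) := by
        fun_prop
      have h0 := hc.tendsto 0
      simp only [add_zero, mul_zero] at h0
      exact h0.mono_left nhdsWithin_le_nhds
    exact ge_of_tendsto hcont (eventually_mem_nhdsWithin.mono fun ε hε => hkey ε hε)
  have hC0 : 0 ≤ liploc f z := by
    have hbdd : IsBoundedUnder (· ≤ ·) (𝓝[≠] z) (fun w => |f w - f z| / dist w z) :=
      ⟨Real.sqrt ((A+1)^2 + (B+1)^2) + (K₂:ℝ)*(K₃:ℝ)*1, eventually_map.2 (hev 1 one_pos)⟩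
    exact le_limsup_of_frequently_le
      (Frequently.of_forall fun w => div_nonneg (abs_nonneg _) dist_nonneg) hbdd
  calc (liploc f z)^2 ≤ (Real.sqrt (A^2 + B^2))^2 := by gcongr
    _ = A^2 + B^2 := Real.sq_sqrt (by positivity)

end MMS
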